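/- Let K and L be regular languages over a finite alphabet Σ with state complexities κ(K) = m ≥ 2 and κ(L) = n ≥ 2. If κ(K ⧢ L) = f(m,n) = 2^{mn−1} + 2^{(m−1)(n−1)}(2^{m−1} − 1)(2^{n−1} − 1), then |Σ| ≥ mn − 1. -/

import Mathlib

/-- `IsShuffleOf u v w` means that the word `w` is a shuffle (interleaving)
of the words `u` and `v`. -/
inductive IsShuffleOf {α : Type*} : List α → List α → List α → Prop
  | nil : IsShuffleOf [] [] []
  | left {a : α} {u v w : List α} : IsShuffleOf u v w → IsShuffleOf (a :: u) v (a :: w)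
  | right {a : α} {u v w : List α} : IsShuffleOf u v w → IsShuffleOf u (a :: v) (a :: w)

/-- The shuffle `K ⧢ L` of two languages. -/
def shuffleLang {α : Type*} (K L : Language α) : Language α :=
  {w | ∃ u ∈ K, ∃ v ∈ L, IsShuffleOf u v w}

/-- The shuffle NFA `𝒩` built from two complete DFAs `𝒦` and `ℒ`. -/
def shuffleNFA {α σK σL : Type*} (K : DFA α σK) (L : DFA α σL) : NFA α (σK × σL) where
  step := fun pq a => {(K.step pq.1 a, pq.2), (pq.1, L.step pq.2 a)}
  start := {(K.start, L.start)}
  accept := {pq | pq.1 ∈ K.accept ∧ pq.2 ∈ L.accept}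

section Correct
variable {α σK σL : Type*} (M : DFA α σK) (N : DFA α σL)

lemma isShuffleOf_nil {u v : List α} (h : IsShuffleOf u v ([] : List α)) : u = [] ∧ v = [] := by
  cases h; exact ⟨rfl, rfl⟩

lemma isShuffleOf_cons_iff (u v w : List α) (a : α) :
    IsShuffleOf u v (a :: w) ↔
      (∃ u', u = a :: u' ∧ IsShuffleOf u' v w) ∨ (∃ v', v = a :: v' ∧ IsShuffleOf u v' w) := by
  constructor
  · intro h
    cases h with
    | left h => exact .inl ⟨_, rfl, h⟩
    | right h => exact .inr ⟨_, rfl, h⟩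
  · rintro (⟨u', rfl, h⟩ | ⟨v', rfl, h⟩)
    exacts [h.left, h.right]

lemma nfa_evalFrom_union (P : NFA α (σK × σL)) (S T : Set (σK × σL)) (w : List α) :
    P.evalFrom (S ∪ T) w = P.evalFrom S w ∪ P.evalFrom T w := by
  induction w generalizing S T with
  | nil => rfl
  | cons a w ih =>
      show P.evalFrom (P.stepSet (S ∪ T) a) w = _
      rw [show P.stepSet (S ∪ T) a = P.stepSet S a ∪ P.stepSet T a by
        ext x; simp only [NFA.stepSet, Set.mem_iUnion, Set.mem_union, exists_prop]; aesop]
      exact ih _ _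

lemma shuffleNFA_evalFrom (w : List α) (p0 : σK) (q0 : σL) (p : σK) (q : σL) :
    (p, q) ∈ (shuffleNFA M N).evalFrom {(p0, q0)} w ↔
      ∃ u v, IsShuffleOf u v w ∧ M.evalFrom p0 u = p ∧ N.evalFrom q0 v = q := by
  induction w generalizing p0 q0 with
  | nil =>
      simp only [NFA.evalFrom_nil, Set.mem_singleton_iff, Prod.mk.injEq]
      constructor
      · rintro ⟨h1, h2⟩; exact ⟨[], [], .nil, h1.symm, h2.symm⟩
      · rintro ⟨u, v, hs, hu, hv⟩
        obtain ⟨rfl, rfl⟩ := isShuffleOf_nil hs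
        exact ⟨hu.symm, hv.symm⟩
  | cons a w ih =>
      have hstep : (shuffleNFA M N).stepSet {(p0, q0)} a
          = ({(M.step p0 a, q0)} : Set (σK × σL)) ∪ {(p0, N.step q0 a)} := by
        rw [show (shuffleNFA M N).stepSet {(p0, q0)} a = (shuffleNFA M N).step (p0, q0) a by
          simp [NFA.stepSet]]
        rw [show (shuffleNFA M N).step (p0, q0) a
            = ({(M.step p0 a, q0), (p0, N.step q0 a)} : Set (σK × σL)) from rfl, Set.insert_eq]
      show (p, q) ∈ (shuffleNFA M N).evalFrom ((shuffleNFA M N).stepSet {(p0, q0)} a) w ↔ _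
      rw [hstep, nfa_evalFrom_union, Set.mem_union, ih, ih]
      constructor
      · rintro (⟨u, v, hs, hu, hv⟩ | ⟨u, v, hs, hu, hv⟩)
        · exact ⟨a :: u, v, hs.left, hu, hv⟩
        · exact ⟨u, a :: v, hs.right, hu, hv⟩
      · rintro ⟨u, v, hs, hu, hv⟩
        rcases (isShuffleOf_cons_iff u v w a).1 hs with ⟨u', rfl, h⟩ | ⟨v', rfl, h⟩
        · exact .inl ⟨u', v, h, hu, hv⟩
        · exact .inr ⟨u, v', h, hu, hv⟩

lemma shuffleNFA_accepts : (shuffleNFA M N).accepts = shuffleLang M.accepts N.accepts := by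
  ext w
  rw [NFA.mem_accepts]
  constructor
  · rintro ⟨⟨p, q⟩, hacc, hmem⟩
    obtain ⟨u, v, hs, hu, hv⟩ := (shuffleNFA_evalFrom M N w _ _ p q).1 hmem
    have hu' : M.eval u = p := hu
    have hv' : N.eval v = q := hv
    exact ⟨u, by rw [DFA.mem_accepts, hu']; exact hacc.1, v,
      by rw [DFA.mem_accepts, hv']; exact hacc.2, hs⟩
  · rintro ⟨u, hu, v, hv, hs⟩
    refine ⟨(M.eval u, N.eval v), ⟨hu, hv⟩, ?_⟩
    exact (shuffleNFA_evalFrom M N w _ _ _ _).2 ⟨u, v, hs, rfl, rfl⟩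

end Correct

section Family
variable {α σK σL : Type*} (M : DFA α σK) (N : DFA α σL)

/-- The family of subsets meeting the start row and the start column. -/
def shufF (M : DFA α σK) (N : DFA α σL) : Set (Set (σK × σL)) :=
  {S | (∃ j, (M.start, j) ∈ S) ∧ (∃ i, (i, N.start) ∈ S)}

lemma start_mem_shufF : (shuffleNFA M N).start ∈ shufF M N :=
  ⟨⟨N.start, rfl⟩, ⟨M.start, rfl⟩⟩

lemma stepSet_mem_shufF (S : Set (σK × σL)) (hS : S ∈ shufF M N) (a : α) :
    (shuffleNFA M N).stepSet S a ∈ shufF M N := by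
  obtain ⟨⟨j, hj⟩, ⟨i, hi⟩⟩ := hS
  constructor
  · exact ⟨N.step j a, NFA.mem_stepSet.2
      ⟨(M.start, j), hj, Set.mem_insert_iff.2 (Or.inr rfl)⟩⟩
  · exact ⟨M.step i a, NFA.mem_stepSet.2 ⟨(i, N.start), hi, Set.mem_insert _ _⟩⟩

lemma toDFA_eval_mem_shufF (w : List α) :
    (shuffleNFA M N).toDFA.eval w ∈ shufF M N := by
  induction w using List.reverseRecOn with
  | nil => exact start_mem_shufF M N
  | append_singleton w a ih =>
      rw [DFA.eval_append_singleton]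
      exact stepSet_mem_shufF M N _ ih a

lemma key_step (i : σK) (j : σL) (hij : (i, j) ≠ (M.start, N.start))
    (T : Set (σK × σL)) (hTF : T ∈ shufF M N)
    (hTne : T ≠ ({(M.start, j), (i, N.start)} : Set (σK × σL))) (a : α)
    (hstep : (shuffleNFA M N).stepSet T a = {(M.start, j), (i, N.start)}) :
    M.step M.start a = i ∧ N.step N.start a = j := by
  set s := M.start with hs
  set t := N.start with ht
  set X : Set (σK × σL) := {(s, j), (i, t)} with hX
  have memX : ∀ p q, (p, q) ∈ X ↔ (p = s ∧ q = j) ∨ (p = i ∧ q = t) := by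
    intro p q
    simp only [hX, Set.mem_insert_iff, Set.mem_singleton_iff, Prod.mk.injEq]
  have hsub : ∀ p q, (p, q) ∈ T → (M.step p a, q) ∈ X ∧ (p, N.step q a) ∈ X := by
    intro p q hpq
    constructor
    · rw [← hstep]; exact NFA.mem_stepSet.2 ⟨(p, q), hpq, Set.mem_insert _ _⟩
    · rw [← hstep]
      exact NFA.mem_stepSet.2 ⟨(p, q), hpq, Set.mem_insert_iff.2 (Or.inr rfl)⟩
  have hsurj : ∀ x : σK × σL, x ∈ X →
      ∃ p q, (p, q) ∈ T ∧ ((M.step p a, q) = x ∨ (p, N.step q a) = x) := by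
    intro x hx
    rw [← hstep] at hx
    obtain ⟨⟨p, q⟩, hpq, hx⟩ := NFA.mem_stepSet.1 hx
    rcases Set.mem_insert_iff.1 hx with h | h
    · exact ⟨p, q, hpq, Or.inl h.symm⟩
    · exact ⟨p, q, hpq, Or.inr (Set.mem_singleton_iff.1 h).symm⟩
  have hTsub : ∀ p q, (p, q) ∈ T → (p = s ∨ p = i) ∧ (q = j ∨ q = t) := by
    intro p q hpq
    obtain ⟨h1, h2⟩ := hsub p q hpq
    rw [memX] at h1 h2
    exact ⟨h2.imp And.left And.left, h1.imp And.right And.right⟩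
  by_cases hst : (s, t) ∈ T
  · obtain ⟨h1, h2⟩ := hsub s t hst
    rw [memX] at h1 h2
    rcases h2 with ⟨-, hNj⟩ | ⟨hsi, hNt⟩
    · rcases h1 with ⟨hMs, htj⟩ | ⟨hMi, -⟩
      · -- M.step s a = s and t = j : show T = X for a contradiction
        exfalso
        have his : i ≠ s := fun h => hij (by rw [h, ← htj])
        apply hTne
        apply Set.Subset.antisymm
        · rintro ⟨p, q⟩ hpq
          obtain ⟨hp, hq⟩ := hTsub p q hpq
          have hq' : q = t := by rcases hq with rfl | rfl; exacts [htj.symm, rfl]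
          rw [memX]
          rcases hp with rfl | rfl
          · exact Or.inl ⟨rfl, hq'.trans htj⟩
          · exact Or.inr ⟨rfl, hq'⟩
        · rintro ⟨p', q'⟩ hx
          rw [memX] at hx
          rcases hx with ⟨hp', hq'⟩ | ⟨hp', hq'⟩ <;> rw [hp', hq']
          · rw [← htj]; exact hst
          · obtain ⟨p, q, hpq, hor⟩ := hsurj (i, t) (by rw [memX]; exact Or.inr ⟨rfl, rfl⟩)
            rcases hor with h | h
            · simp only [Prod.mk.injEq] at h
              obtain ⟨hMp, hq⟩ := h
              rcases (hTsub p q hpq).1 with hp | hp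
              · exact absurd (((hp ▸ hMp : M.step s a = i)).symm.trans hMs) his
              · exact hp ▸ hq ▸ hpq
            · simp only [Prod.mk.injEq] at h
              obtain ⟨hpi, -⟩ := h
              have hq' : q = t := by
                rcases (hTsub p q hpq).2 with rfl | rfl; exacts [htj.symm, rfl]
              exact hpi ▸ hq' ▸ hpq
      · exact ⟨hMi, hNj⟩
    · rcases h1 with ⟨hMs, htj⟩ | ⟨hMi, -⟩
      · exact absurd (by rw [← hsi, ← htj]) hij
      · -- M.step s a = i, s = i, N.step t a = t : show T = X for a contradiction
        exfalso
        have hjt : j ≠ t := fun h => hij (by rw [← hsi, h])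
        apply hTne
        apply Set.Subset.antisymm
        · rintro ⟨p, q⟩ hpq
          obtain ⟨hp, hq⟩ := hTsub p q hpq
          have hp' : p = s := by rcases hp with rfl | rfl; exacts [rfl, hsi.symm]
          rw [memX]
          rcases hq with rfl | rfl
          · exact Or.inl ⟨hp', rfl⟩
          · exact Or.inr ⟨hp'.trans hsi, rfl⟩
        · rintro ⟨p', q'⟩ hx
          rw [memX] at hx
          rcases hx with ⟨hp', hq'⟩ | ⟨hp', hq'⟩ <;> rw [hp', hq']
          · obtain ⟨p, q, hpq, hor⟩ := hsurj (s, j) (by rw [memX]; exact Or.inl ⟨rfl, rfl⟩)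
            rcases hor with h | h
            · simp only [Prod.mk.injEq] at h
              obtain ⟨-, hq⟩ := h
              have hp' : p = s := by
                rcases (hTsub p q hpq).1 with rfl | rfl; exacts [rfl, hsi.symm]
              exact hp' ▸ hq ▸ hpq
            · simp only [Prod.mk.injEq] at h
              obtain ⟨hps, hq⟩ := h
              rcases (hTsub p q hpq).2 with hq2 | hq2
              · exact hps ▸ hq2 ▸ hpq
              · exact absurd (hNt.symm.trans (hq2 ▸ hq)) hjt.symm
          · rw [← hsi]; exact hst
  · -- (s, t) ∉ T
    obtain ⟨⟨j0, hj0⟩, ⟨i0, hi0⟩⟩ := hTF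
    have hsjT : (s, j) ∈ T ∧ j ≠ t := by
      rcases (hTsub s j0 hj0).2 with rfl | rfl
      · exact ⟨hj0, fun h => hst (h ▸ hj0)⟩
      · exact absurd hj0 hst
    obtain ⟨hsj, hjt⟩ := hsjT
    have hitT : (i, t) ∈ T ∧ i ≠ s := by
      rcases (hTsub i0 t hi0).1 with rfl | rfl
      · exact absurd hi0 hst
      · exact ⟨hi0, fun h => hst (h ▸ hi0)⟩
    obtain ⟨hit, his⟩ := hitT
    have h1 := (hsub s j hsj).1
    rw [memX] at h1
    have hMs : M.step s a = s := by
      rcases h1 with ⟨h, -⟩ | ⟨-, h⟩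
      · exact h
      · exact absurd h hjt
    have h2 := (hsub i t hit).2
    rw [memX] at h2
    have hNt : N.step t a = t := by
      rcases h2 with ⟨h, -⟩ | ⟨-, h⟩
      · exact absurd h his
      · exact h
    exfalso
    apply hTne
    apply Set.Subset.antisymm
    · rintro ⟨p, q⟩ hpq
      obtain ⟨hp, hq⟩ := hTsub p q hpq
      rw [memX]
      rcases hp with hp | hp
      · rcases hq with hq | hq
        · exact Or.inl ⟨hp, hq⟩
        · exact absurd (hp ▸ hq ▸ hpq) hst
      · rcases hq with hq | hq
        · -- (i, j) ∈ T : impossible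
          exfalso
          have hA := (hsub p q hpq).1
          rw [memX] at hA
          have hMi : M.step p a = s := by
            rcases hA with ⟨h, -⟩ | ⟨-, h⟩
            · exact h
            · exact absurd (hq.symm.trans h) hjt
          have hB := (hsub i t hit).1
          rw [memX] at hB
          have hMi' : M.step i a = i := by
            rcases hB with ⟨-, h⟩ | ⟨h, -⟩
            · exact absurd h.symm hjt
            · exact h
          exact his (hMi'.symm.trans (hp ▸ hMi))
        · exact Or.inr ⟨hp, hq⟩
    · rintro ⟨p', q'⟩ hx
      rw [memX] at hx
      rcases hx with ⟨hp', hq'⟩ | ⟨hp', hq'⟩ <;> rw [hp', hq']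
      exacts [hsj, hit]

lemma reach_letter (i : σK) (j : σL) (hij : (i, j) ≠ (M.start, N.start)) :
    ∀ w : List α,
      (shuffleNFA M N).toDFA.eval w = ({(M.start, j), (i, N.start)} : Set (σK × σL)) →
      ∃ a, M.step M.start a = i ∧ N.step N.start a = j := by
  intro w
  induction w using List.reverseRecOn with
  | nil =>
      intro h
      exfalso
      have h1 : ((M.start, j) : σK × σL) ∈ ({(M.start, N.start)} : Set (σK × σL)) := by
        rw [show ({(M.start, N.start)} : Set (σK × σL)) = (shuffleNFA M N).toDFA.eval [] from rfl,
          h]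
        exact Set.mem_insert _ _
      have h2 : ((i, N.start) : σK × σL) ∈ ({(M.start, N.start)} : Set (σK × σL)) := by
        rw [show ({(M.start, N.start)} : Set (σK × σL)) = (shuffleNFA M N).toDFA.eval [] from rfl,
          h]
        exact Set.mem_insert_iff.2 (Or.inr rfl)
      simp only [Set.mem_singleton_iff, Prod.mk.injEq] at h1 h2
      exact hij (by rw [h2.1, h1.2])
  | append_singleton w a ih =>
      intro h
      rw [DFA.eval_append_singleton] at h
      by_cases hT : (shuffleNFA M N).toDFA.eval w
          = ({(M.start, j), (i, N.start)} : Set (σK × σL))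
      · exact ih hT
      · exact ⟨a, key_step M N i j hij _ (toDFA_eval_mem_shufF M N w) hT a h⟩

end Family

section Counting
variable {α : Type*}

lemma arith_helper (cP cU a Q R P1 d : ℕ) (h1 : cP + cU = P1 * 2) (h2 : cU + a = Q + R)
    (h3 : d + (Q + R) = P1 + a) : cP = P1 + d := by omega

lemma card_shufF {σK σL : Type*} [Fintype σK] [Fintype σL]
    (M : DFA α σK) (N : DFA α σL) (m n : ℕ) (hm : 2 ≤ m) (hn : 2 ≤ n)
    (cardK : Fintype.card σK = m) (cardL : Fintype.card σL = n) :
    Nat.card (shufF M N) =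
      2 ^ (m * n - 1) + 2 ^ ((m - 1) * (n - 1)) * (2 ^ (m - 1) - 1) * (2 ^ (n - 1) - 1) := by
  classical
  obtain ⟨m', rfl⟩ : ∃ m', m = m' + 2 := ⟨m - 2, by omega⟩
  obtain ⟨n', rfl⟩ : ∃ n', n = n' + 2 := ⟨n - 2, by omega⟩
  set s := M.start
  set t := N.start
  set P' : Finset (σK × σL) → Prop :=
    fun T => (∃ j, (s, j) ∈ T) ∧ (∃ i, (i, t) ∈ T) with hP'
  have e1 : {T : Finset (σK × σL) // P' T} ≃ ↥(shufF M N) :=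
    Equiv.subtypeEquiv Fintype.finsetEquivSet (by
      intro T
      simp only [hP', Fintype.finsetEquivSet_apply, shufF, Set.mem_setOf_eq, Finset.mem_coe]
      exact Iff.rfl)
  have hNcard : Nat.card ↥(shufF M N) = (Finset.univ.filter P').card := by
    rw [← Nat.card_congr e1, Nat.card_eq_fintype_card, Fintype.card_subtype]
  set A : Finset (σK × σL) := {s}ᶜ ×ˢ Finset.univ with hA
  set B : Finset (σK × σL) := Finset.univ ×ˢ {t}ᶜ with hB
  have hAiff : ∀ T : Finset (σK × σL), T ⊆ A ↔ ∀ j, (s, j) ∉ T := by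
    intro T
    constructor
    · intro hT j hj
      have := hT hj
      simp [hA, Finset.mem_product] at this
    · intro h x hx
      simp only [hA, Finset.mem_product, Finset.mem_compl, Finset.mem_singleton, Finset.mem_univ,
        and_true]
      intro hxs
      exact h x.2 ((show x = (s, x.2) from Prod.ext hxs rfl) ▸ hx)
  have hBiff : ∀ T : Finset (σK × σL), T ⊆ B ↔ ∀ i, (i, t) ∉ T := by
    intro T
    constructor
    · intro hT i hi
      have := hT hi
      simp [hB, Finset.mem_product] at this
    · intro h x hx
      simp only [hB, Finset.mem_product, Finset.mem_compl, Finset.mem_singleton, Finset.mem_univ,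
        true_and]
      intro hxt
      exact h x.1 ((show x = (x.1, t) from Prod.ext rfl hxt) ▸ hx)
  have hnotP : Finset.univ.filter (fun T => ¬ P' T) = A.powerset ∪ B.powerset := by
    ext T
    simp only [Finset.mem_filter, Finset.mem_univ, true_and, Finset.mem_union,
      Finset.mem_powerset, hP', not_and_or, not_exists, hAiff, hBiff]
  have hinter : A.powerset ∩ B.powerset = (A ∩ B).powerset := by
    ext T
    simp only [Finset.mem_inter, Finset.mem_powerset, Finset.subset_inter_iff]
  have hcardA : A.card = (m' + 1) * (n' + 2) := by
    rw [hA, Finset.card_product, Finset.card_compl, Finset.card_singleton, cardK,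
      Finset.card_univ, cardL]
    rfl
  have hcardB : B.card = (m' + 2) * (n' + 1) := by
    rw [hB, Finset.card_product, Finset.card_compl, Finset.card_singleton, cardL,
      Finset.card_univ, cardK]
    rfl
  have hAB : A ∩ B = ({s}ᶜ : Finset σK) ×ˢ ({t}ᶜ : Finset σL) := by
    ext x
    simp only [hA, hB, Finset.mem_inter, Finset.mem_product, Finset.mem_compl,
      Finset.mem_singleton, Finset.mem_univ, and_true, true_and]
  have hcardAB : (A ∩ B).card = (m' + 1) * (n' + 1) := by
    rw [hAB, Finset.card_product, Finset.card_compl, Finset.card_singleton, cardK,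
      Finset.card_compl, Finset.card_singleton, cardL]
    rfl
  have htot : (Finset.univ.filter P').card + (A.powerset ∪ B.powerset).card
      = 2 ^ ((m' + 2) * (n' + 2)) := by
    rw [← hnotP, Finset.card_filter_add_card_filter_not, Finset.card_univ,
      Fintype.card_finset, Fintype.card_prod, cardK, cardL]
  have hU : (A.powerset ∪ B.powerset).card + 2 ^ ((m' + 1) * (n' + 1))
      = 2 ^ ((m' + 1) * (n' + 2)) + 2 ^ ((m' + 2) * (n' + 1)) := by
    rw [← hcardA, ← hcardB, ← hcardAB, ← Finset.card_powerset, ← Finset.card_powerset,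
      ← Finset.card_powerset, ← hinter]
    exact Finset.card_union_add_card_inter _ _
  rw [hNcard]
  -- arithmetic
  set a := 2 ^ ((m' + 1) * (n' + 1)) with ha
  have h2 : 2 ^ ((m' + 1) * (n' + 2)) = a * 2 ^ (m' + 1) := by
    rw [ha, ← pow_add,
      show (m' + 1) * (n' + 1) + (m' + 1) = (m' + 1) * (n' + 2) from by ring]
  have h3 : 2 ^ ((m' + 2) * (n' + 1)) = a * 2 ^ (n' + 1) := by
    rw [ha, ← pow_add,
      show (m' + 1) * (n' + 1) + (n' + 1) = (m' + 2) * (n' + 1) from by ring]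
  have h1 : 2 ^ ((m' + 2) * (n' + 2)) = a * 2 ^ (m' + 1) * 2 ^ (n' + 1) * 2 := by
    rw [ha, ← pow_add, ← pow_add, ← pow_succ,
      show (m' + 1) * (n' + 1) + (m' + 1) + (n' + 1) + 1 = (m' + 2) * (n' + 2) from by ring]
  have h4 : 2 ^ ((m' + 2) * (n' + 2) - 1) = a * 2 ^ (m' + 1) * 2 ^ (n' + 1) := by
    rw [ha, ← pow_add, ← pow_add,
      show (m' + 1) * (n' + 1) + (m' + 1) + (n' + 1) = (m' + 2) * (n' + 2) - 1 from by
        have : (m' + 2) * (n' + 2) = ((m' + 1) * (n' + 1) + (m' + 1) + (n' + 1)) + 1 := by ring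
        omega]
  have hsimp1 : m' + 2 - 1 = m' + 1 := rfl
  have hsimp2 : n' + 2 - 1 = n' + 1 := rfl
  rw [hsimp1, hsimp2, h4]
  rw [h1] at htot
  rw [h2, h3] at hU
  have hd : a * (2 ^ (m' + 1) - 1) * (2 ^ (n' + 1) - 1)
      + (a * 2 ^ (m' + 1) + a * 2 ^ (n' + 1))
      = a * 2 ^ (m' + 1) * 2 ^ (n' + 1) + a := by
    obtain ⟨b', hb'⟩ : ∃ b', 2 ^ (m' + 1) = b' + 1 :=
      ⟨2 ^ (m' + 1) - 1, by have : 1 ≤ 2 ^ (m' + 1) := Nat.one_le_two_pow; omega⟩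
    obtain ⟨c', hc'⟩ : ∃ c', 2 ^ (n' + 1) = c' + 1 :=
      ⟨2 ^ (n' + 1) - 1, by have : 1 ≤ 2 ^ (n' + 1) := Nat.one_le_two_pow; omega⟩
    rw [hb', hc']
    simp only [Nat.add_sub_cancel]
    ring
  exact arith_helper _ _ _ _ _ _ _ htot hU hd

end Counting

/-- `IsStateComplexity L m` says the minimal complete DFA recognizing `L`
has exactly `m` states. -/
def IsStateComplexity {α : Type*} (L : Language α) (m : ℕ) : Prop :=
  (∃ (σ : Type) (_ : Fintype σ) (M : DFA α σ), M.accepts = L ∧ Fintype.card σ = m) ∧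
  (∀ (σ : Type) (_ : Fintype σ) (M : DFA α σ), M.accepts = L → m ≤ Fintype.card σ)

/-- If `κ(K) = m ≥ 2`, `κ(L) = n ≥ 2` and `κ(K ⧢ L) = f(m,n)`, then the alphabet
has at least `mn - 1` letters. -/
theorem stmt_5 {α : Type*} [Fintype α] (K L : Language α) (m n : ℕ)
    (hm : 2 ≤ m) (hn : 2 ≤ n)
    (hK : IsStateComplexity K m) (hL : IsStateComplexity L n)
    (hf : IsStateComplexity (shuffleLang K L)
      (2 ^ (m * n - 1) +
        2 ^ ((m - 1) * (n - 1)) * (2 ^ (m - 1) - 1) * (2 ^ (n - 1) - 1))) :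
    m * n - 1 ≤ Fintype.card α := by
  classical
  obtain ⟨⟨σK, instK, M, hM, cardK⟩, -⟩ := hK
  obtain ⟨⟨σL, instL, N, hN, cardL⟩, -⟩ := hL
  obtain ⟨-, hmin⟩ := hf
  set f := 2 ^ (m * n - 1) +
      2 ^ ((m - 1) * (n - 1)) * (2 ^ (m - 1) - 1) * (2 ^ (n - 1) - 1) with hfdef
  let D := (shuffleNFA M N).toDFA
  have hD : D.accepts = shuffleLang K L := by
    rw [show D.accepts = (shuffleNFA M N).accepts from NFA.toDFA_correct,
      shuffleNFA_accepts, hM, hN]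
  let R : Set (Set (σK × σL)) := Set.range D.eval
  haveI fR : Fintype ↥R := Fintype.ofFinite _
  let D' : DFA α ↥R :=
    { step := fun S a => ⟨D.step S.1 a, by
        obtain ⟨w, hw⟩ := S.2
        exact ⟨w ++ [a], by rw [DFA.eval_append_singleton, hw]⟩⟩
      start := ⟨D.start, ⟨[], rfl⟩⟩
      accept := {S | S.1 ∈ D.accept} }
  have hD'eval : ∀ w, (D'.eval w).1 = D.eval w := by
    intro w
    induction w using List.reverseRecOn with
    | nil => rfl
    | append_singleton w a ih =>
        rw [DFA.eval_append_singleton, DFA.eval_append_singleton]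
        show D.step (D'.eval w).1 a = _
        rw [ih]
  have hD'acc : D'.accepts = shuffleLang K L := by
    rw [← hD]
    ext w
    rw [DFA.mem_accepts, DFA.mem_accepts]
    show (D'.eval w).1 ∈ D.accept ↔ _
    rw [hD'eval]
  have hfR : f ≤ Fintype.card ↥R := hmin ↥R fR D' hD'acc
  have hRF : R ⊆ shufF M N := by
    rintro S ⟨w, rfl⟩
    exact toDFA_eval_mem_shufF M N w
  have hFcard : Nat.card ↥(shufF M N) = f := card_shufF M N m n hm hn cardK cardL
  have hncard : (shufF M N).ncard ≤ R.ncard := by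
    rw [← Nat.card_coe_set_eq, ← Nat.card_coe_set_eq, hFcard,
      Nat.card_eq_fintype_card]
    exact hfR
  have hReq : R = shufF M N := Set.eq_of_subset_of_ncard_le hRF hncard (Set.toFinite _)
  have hX : ∀ x : σK × σL, x ≠ (M.start, N.start) →
      ∃ a : α, M.step M.start a = x.1 ∧ N.step N.start a = x.2 := by
    rintro ⟨i, j⟩ hx
    have hmem : ({(M.start, j), (i, N.start)} : Set (σK × σL)) ∈ shufF M N :=
      ⟨⟨j, Set.mem_insert _ _⟩, ⟨i, Set.mem_insert_iff.2 (Or.inr rfl)⟩⟩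
    rw [← hReq] at hmem
    obtain ⟨w, hw⟩ := hmem
    exact reach_letter M N i j hx w hw
  choose g hg1 hg2 using fun x : {x : σK × σL // x ≠ (M.start, N.start)} => hX x.1 x.2
  have hginj : Function.Injective g := by
    intro x y hxy
    apply Subtype.ext
    apply Prod.ext
    · rw [← hg1 x, ← hg1 y, hxy]
    · rw [← hg2 x, ← hg2 y, hxy]
  have hcard : Fintype.card {x : σK × σL // x ≠ (M.start, N.start)} ≤ Fintype.card α :=
    Fintype.card_le_of_injective g hginj
  have hcnt : Fintype.card {x : σK × σL // x ≠ (M.start, N.start)} = m * n - 1 := by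
    rw [Fintype.card_subtype_compl, Fintype.card_subtype_eq, Fintype.card_prod, cardK, cardL]
  rw [← hcnt]
  exact hcard
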